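/- Let c ∈ ℂ with |c| ≤ 1/8 and let δ ∈ (0, 1/2]. Then every λ ∈ ℂ with λ ≠ 0 satisfying ((1−λ)/λ²)·c = λ + δ − 1 has |λ| < 1 − δ/2. -/

import Mathlib

/-- Scalar stabilization estimate (Sections 3.1.1 and 3.1.3): if `|c| ≤ 1/8` and
`δ ∈ (0, 1/2]`, then every nonzero `λ ∈ ℂ` with `((1−λ)/λ²)·c = λ + δ − 1` satisfies
`|λ| < 1 − δ/2`. -/
theorem stmt6 (c : ℂ) (hc : ‖c‖ ≤ 1 / 8) (δ : ℝ) (hδ : δ ∈ Set.Ioc (0 : ℝ) (1 / 2))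
    (lam : ℂ) (hlam0 : lam ≠ 0) (hlam : ((1 - lam) / lam ^ 2) * c = lam + (δ : ℂ) - 1) :
    ‖lam‖ < 1 - δ / 2 := by
  obtain ⟨hδ0, hδ2⟩ := hδ
  by_contra h
  push_neg at h
  have key : (1 - lam) * c = lam ^ 2 * (lam + (δ : ℂ) - 1) := by
    field_simp at hlam
    linear_combination hlam
  set r := ‖lam‖ with hr
  set s := ‖1 - lam‖ with hs
  set a := ‖lam + (δ : ℂ) - 1‖ with ha
  have E : s * ‖c‖ = r ^ 2 * a := by
    have := congrArg (fun z : ℂ => ‖z‖) key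
    simpa [map_mul, map_pow] using this
  -- triangle inequalities
  have h1 : s ≤ a + δ := by
    have heq : s = ‖(δ : ℂ) - (lam + (δ : ℂ) - 1)‖ := by
      rw [hs]; congr 1; ring
    rw [heq]
    calc ‖(δ : ℂ) - (lam + (δ : ℂ) - 1)‖
        ≤ ‖(δ : ℂ)‖ + a := norm_sub_le _ _
      _ = a + δ := by rw [Complex.norm_real, Real.norm_eq_abs, abs_of_pos hδ0]; ring
  have h3 : r ≤ a + (1 - δ) := by
    have : lam = (lam + (δ : ℂ) - 1) + ((1 : ℂ) - (δ : ℂ)) := by ring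
    calc r = ‖(lam + (δ : ℂ) - 1) + ((1 : ℂ) - (δ : ℂ))‖ := by rw [hr, ← this]
      _ ≤ a + ‖(1 : ℂ) - (δ : ℂ)‖ := norm_add_le _ _
      _ = a + (1 - δ) := by
          have : ((1 : ℂ) - (δ : ℂ)) = ((1 - δ : ℝ) : ℂ) := by push_cast; ring
          rw [this, Complex.norm_real, Real.norm_eq_abs, abs_of_nonneg (by linarith)]
  have hs0 : 0 ≤ s := norm_nonneg _
  have ha0 : 0 ≤ a := norm_nonneg _
  have hc0 : 0 ≤ ‖c‖ := norm_nonneg _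
  have hr34 : (3 : ℝ) / 4 ≤ r := by linarith
  -- a ≥ δ/2
  have ha2 : δ / 2 ≤ a := by linarith
  -- r² a ≤ (a + δ)/8
  have hE2 : r ^ 2 * a ≤ (a + δ) / 8 := by
    calc r ^ 2 * a = s * ‖c‖ := E.symm
      _ ≤ (a + δ) * (1 / 8) := by
          apply mul_le_mul h1 hc hc0 (by linarith)
      _ = (a + δ) / 8 := by ring
  have hr2 : (9 : ℝ) / 16 ≤ r ^ 2 := by nlinarith
  nlinarith [mul_le_mul_of_nonneg_right hr2 ha0]
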